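/- Let G be a group, let H ≤ G be a subgroup of finite bi-index in G, and let K ≤ G be a subgroup of finite index in G. Then H ∩ K has finite bi-index in K. -/

import Mathlib

open scoped Pointwise

/-- A subgroup `H ≤ G` has finite bi-index if the set of double cosets
`{HgH : g ∈ G}` is finite. -/
def FiniteBiIndex {G : Type*} [Group G] (H : Subgroup G) : Prop :=
  {S : Set G | ∃ g : G, S = (H : Set G) * {g} * (H : Set G)}.Finite

/-- The set of double cosets of a subgroup `H` of a group `M` with representatives in a
subgroup `G` of `M`; for `H ≤ G` this is the set of double cosets `H\G/H`. -/
def doubleCosets {M : Type*} [Group M] (G H : Subgroup M) : Set (Set M) :=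
  {S : Set M | ∃ g ∈ G, S = (H : Set M) * {g} * (H : Set M)}

/-- The pro-normal closure of a subgroup `H ≤ G`: the intersection of the subsets `HN`,
over all nontrivial normal subgroups `N` of `G`. -/
def pronormalClosure {G : Type*} [Group G] (H : Subgroup G) : Subgroup G where
  carrier := ⋂ N ∈ {N : Subgroup G | N.Normal ∧ N ≠ ⊥}, (H : Set G) * (N : Set G)
  one_mem' := by
    simp only [Set.mem_iInter]
    rintro N ⟨hN, -⟩
    exact ⟨1, H.one_mem, 1, N.one_mem, mul_one 1⟩
  mul_mem' := by
    intro a b ha hb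
    simp only [Set.mem_iInter] at ha hb ⊢
    rintro N hN
    obtain ⟨h₁, hh₁, n₁, hn₁, rfl⟩ := ha N hN
    obtain ⟨h₂, hh₂, n₂, hn₂, rfl⟩ := hb N hN
    refine ⟨h₁ * h₂, H.mul_mem hh₁ hh₂, (h₂⁻¹ * n₁ * h₂) * n₂, ?_, by group⟩
    refine N.mul_mem ?_ hn₂
    have := hN.1.conj_mem n₁ hn₁ h₂⁻¹
    simpa using this
  inv_mem' := by
    intro a ha
    simp only [Set.mem_iInter] at ha ⊢
    rintro N hN
    obtain ⟨h, hh, n, hn, rfl⟩ := ha N hN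
    refine ⟨h⁻¹, H.inv_mem hh, h * n⁻¹ * h⁻¹, hN.1.conj_mem n⁻¹ (N.inv_mem hn) h, by group⟩

/-- A subgroup `H ≤ G` is quasi-prodense if its pro-normal closure has finite index. -/
def QuasiProdense {G : Type*} [Group G] (H : Subgroup G) : Prop :=
  (pronormalClosure H).index ≠ 0

/-- `K` is a normal subgroup of the subgroup `H` (both subgroups of an ambient group). -/
def NormalIn {M : Type*} [Group M] (H K : Subgroup M) : Prop :=
  K ≤ H ∧ ∀ h ∈ H, ∀ k ∈ K, h * k * h⁻¹ ∈ K

/-- `K` is a subnormal subgroup of the subgroup `H`. -/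
def SubnormalIn {M : Type*} [Group M] (H K : Subgroup M) : Prop :=
  ∃ (m : ℕ) (c : ℕ → Subgroup M), c 0 = K ∧ c m = H ∧ ∀ i < m, NormalIn (c (i + 1)) (c i)

/-- The iterated derived subgroups of a subgroup. -/
def iterDerived {M : Type*} [Group M] (H : Subgroup M) : ℕ → Subgroup M
  | 0 => H
  | (k + 1) => ⁅iterDerived H k, iterDerived H k⁆

lemma coe_mul_singleton_of_mem {G : Type*} [Group G] (L : Subgroup G) {l : G} (hl : l ∈ L) :
    (L : Set G) * {l} = (L : Set G) := by
  ext x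
  simp only [Set.mem_mul, Set.mem_singleton_iff, SetLike.mem_coe]
  constructor
  · rintro ⟨a, ha, b, rfl, rfl⟩; exact L.mul_mem ha hl
  · intro hx; exact ⟨x * l⁻¹, L.mul_mem hx (L.inv_mem hl), l, rfl, by group⟩

lemma singleton_mul_coe_of_mem {G : Type*} [Group G] (L : Subgroup G) {l : G} (hl : l ∈ L) :
    ({l} : Set G) * (L : Set G) = (L : Set G) := by
  ext x
  simp only [Set.mem_mul, Set.mem_singleton_iff, SetLike.mem_coe]
  constructor
  · rintro ⟨a, rfl, b, hb, rfl⟩; exact L.mul_mem hl hb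
  · intro hx; exact ⟨l, rfl, l⁻¹ * x, L.mul_mem (L.inv_mem hl) hx, by group⟩

lemma double_coset_absorb {G : Type*} [Group G] (L : Subgroup G) {l₁ l₂ : G}
    (h₁ : l₁ ∈ L) (h₂ : l₂ ∈ L) (x : G) :
    (L : Set G) * {l₁ * x * l₂} * (L : Set G) = (L : Set G) * {x} * (L : Set G) := by
  have : ({l₁ * x * l₂} : Set G) = {l₁} * {x} * {l₂} := by
    simp [Set.singleton_mul_singleton]
  rw [this]
  calc (L : Set G) * ({l₁} * {x} * {l₂}) * (L : Set G)
      = ((L : Set G) * {l₁}) * {x} * (({l₂} : Set G) * (L : Set G)) := by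
        simp only [mul_assoc]
    _ = (L : Set G) * {x} * (L : Set G) := by
        rw [coe_mul_singleton_of_mem L h₁, singleton_mul_coe_of_mem L h₂, mul_assoc]

/-- If `H` has finite bi-index in `G` and `K` has finite index in `G`, then `H ⊓ K`
has finite bi-index in `K`. -/
theorem inter_finiteBiIndex {G : Type*} [Group G] (H K : Subgroup G)
    (hH : FiniteBiIndex H) (hK : K.index ≠ 0) :
    {S : Set G | ∃ g ∈ K,
      S = ((H ⊓ K : Subgroup G) : Set G) * {g} * ((H ⊓ K : Subgroup G) : Set G)}.Finite := by
  classical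
  set L : Subgroup G := H ⊓ K with hL
  set N : Subgroup H := K.subgroupOf H with hN
  haveI : K.FiniteIndex := ⟨hK⟩
  haveI : N.FiniteIndex := Subgroup.instFiniteIndex_subgroupOf K H
  haveI : Finite (H ⧸ N) := Subgroup.finite_quotient_of_finiteIndex
  -- For each H-double coset D, the set of L-double cosets (with rep in K) contained in D
  set F : Set G → Set (Set G) := fun D =>
    {T : Set G | ∃ g ∈ K, (H : Set G) * {g} * (H : Set G) = D ∧
      T = (L : Set G) * {g} * (L : Set G)} with hF
  have hsub : {S : Set G | ∃ g ∈ K,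
      S = ((H ⊓ K : Subgroup G) : Set G) * {g} * ((H ⊓ K : Subgroup G) : Set G)} ⊆
      ⋃ D ∈ {S : Set G | ∃ g : G, S = (H : Set G) * {g} * (H : Set G)}, F D := by
    rintro S ⟨g, hg, rfl⟩
    exact Set.mem_biUnion ⟨g, rfl⟩ ⟨g, hg, rfl, rfl⟩
  refine Set.Finite.subset (Set.Finite.biUnion hH ?_) hsub
  rintro D -
  rcases Set.eq_empty_or_nonempty (F D) with hE | hNE
  · rw [hE]; exact Set.finite_empty
  obtain ⟨T₀, g₀, hg₀K, hg₀D, hT₀eq⟩ := hNE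
  have key : F D ⊆ Set.range (fun p : (H ⧸ N) × (H ⧸ N) =>
      (L : Set G) * {((p.1.out : H) : G)⁻¹ * g₀ * ((p.2.out : H) : G)} * (L : Set G)) := by
    rintro T ⟨g, hgK, hgD, rfl⟩
    have hmem : g ∈ (H : Set G) * {g₀} * (H : Set G) := by
      rw [hg₀D, ← hgD]
      exact ⟨g, ⟨1, H.one_mem, g, rfl, one_mul g⟩, 1, H.one_mem, mul_one g⟩
    obtain ⟨u, ⟨h, hh, x', hx', hu⟩, h', hh', hg⟩ := hmem
    rw [Set.mem_singleton_iff] at hx'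
    rw [hx'] at hu
    subst hu
    rw [SetLike.mem_coe] at hh hh'
    set a : H := ⟨h, hh⟩ with ha
    set b : H := ⟨h', hh'⟩ with hb
    obtain ⟨n₁, hn₁⟩ := QuotientGroup.mk_out_eq_mul N a⁻¹
    obtain ⟨n₂, hn₂⟩ := QuotientGroup.mk_out_eq_mul N b
    refine ⟨(QuotientGroup.mk a⁻¹, QuotientGroup.mk b), ?_⟩
    simp only
    have e₁ : (((QuotientGroup.mk a⁻¹ : H ⧸ N).out : H) : G) = h⁻¹ * ((n₁ : H) : G) := by
      rw [hn₁]; push_cast [ha]; rfl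
    have e₂ : (((QuotientGroup.mk b : H ⧸ N).out : H) : G) = h' * ((n₂ : H) : G) := by
      rw [hn₂]; push_cast [hb]; rfl
    have hha : h = ((n₁ : H) : G) * (((QuotientGroup.mk a⁻¹ : H ⧸ N).out : H) : G)⁻¹ := by
      rw [e₁]; group
    have hhb : h' = (((QuotientGroup.mk b : H ⧸ N).out : H) : G) * ((n₂ : H) : G)⁻¹ := by
      rw [e₂]; group
    have hln₁ : ((n₁ : H) : G) ∈ L := ⟨(n₁ : H).2, n₁.2⟩
    have hln₂ : ((n₂ : H) : G)⁻¹ ∈ L := L.inv_mem ⟨(n₂ : H).2, n₂.2⟩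
    have habs := double_coset_absorb L hln₁ hln₂
      ((((QuotientGroup.mk a⁻¹ : H ⧸ N).out : H) : G)⁻¹ * g₀ *
        (((QuotientGroup.mk b : H ⧸ N).out : H) : G))
    rw [← hg, hha, hhb, ← habs]
    congr 2
    group
  exact Set.Finite.subset (Set.finite_range _) key
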